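/- Let −∞ < a < b < ∞, let w : [a,b] → ℝ be continuously differentiable with w > 0 on (a,b), and let {pₙ}_{n∈ℤ₊} be real polynomials orthonormal with respect to the measure w(x)dx on (a,b). Define φₙ(x) = √(w(x)) pₙ(x) and, assuming each product φₘ′ φₙ is integrable on (a,b), set D_{m,n} = ∫_a^b φₘ′(x) φₙ(x) dx. Then for all m, n ∈ ℤ₊: D_{m,n} + D_{n,m} = w(b) pₘ(b) pₙ(b) − w(a) pₘ(a) pₙ(a). In particular, if w(a) = w(b) = 0 then the differentiation matrix D is skew-symmetric: D_{m,n} = −D_{n,m} for all m, n ∈ ℤ₊. -/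

import Mathlib

open MeasureTheory

/-- The W-system function `φ(x) = √(w(x)) p(x)` attached to a weight `w` and a polynomial. -/
noncomputable def wSysFun (w : ℝ → ℝ) (p : Polynomial ℝ) (x : ℝ) : ℝ :=
  Real.sqrt (w x) * p.eval x

/-- for a W-system `φₙ = √w pₙ` on `(a,b)` with `w ∈ C¹[a,b]`, `w > 0` on
`(a,b)` and `{pₙ}` orthonormal w.r.t. `w dx`, the differentiation matrix
`D_{m,n} = ∫_a^b φₘ′ φₙ` satisfies
`D_{m,n} + D_{n,m} = w(b)pₘ(b)pₙ(b) − w(a)pₘ(a)pₙ(a)`; in particular `D` is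
skew-symmetric when `w(a) = w(b) = 0`. -/
theorem wSystem_differentiationMatrix_skewSymmetric
    (a b : ℝ) (hab : a < b) (w : ℝ → ℝ)
    (hw : ContDiffOn ℝ 1 w (Set.Icc a b))
    (hwpos : ∀ x ∈ Set.Ioo a b, 0 < w x)
    (p : ℕ → Polynomial ℝ)
    (horth : ∀ m n : ℕ,
      ∫ x in Set.Ioo a b, (p m).eval x * (p n).eval x * w x = if m = n then 1 else 0)
    (hint : ∀ m n : ℕ, IntegrableOn
      (fun x => deriv (wSysFun w (p m)) x * wSysFun w (p n) x) (Set.Ioo a b)) :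
    (∀ m n : ℕ,
      (∫ x in Set.Ioo a b, deriv (wSysFun w (p m)) x * wSysFun w (p n) x)
        + (∫ x in Set.Ioo a b, deriv (wSysFun w (p n)) x * wSysFun w (p m) x)
        = w b * (p m).eval b * (p n).eval b - w a * (p m).eval a * (p n).eval a) ∧
    (w a = 0 → w b = 0 → ∀ m n : ℕ,
      (∫ x in Set.Ioo a b, deriv (wSysFun w (p m)) x * wSysFun w (p n) x)
        = -(∫ x in Set.Ioo a b, deriv (wSysFun w (p n)) x * wSysFun w (p m) x)) := by
  -- differentiability of φ on the open interval
  have hwd : ∀ x ∈ Set.Ioo a b, DifferentiableAt ℝ w x := by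
    intro x hx
    have := (hw.differentiableOn one_ne_zero) x (Set.Ioo_subset_Icc_self hx)
    exact this.differentiableAt (Filter.mem_of_superset (isOpen_Ioo.mem_nhds hx)
      Set.Ioo_subset_Icc_self)
  have hφd : ∀ (k : ℕ) (x : ℝ), x ∈ Set.Ioo a b → DifferentiableAt ℝ (wSysFun w (p k)) x := by
    intro k x hx
    exact (((hwd x hx).sqrt (hwpos x hx).ne').mul (Polynomial.differentiable _ x) : _)
  have key : ∀ m n : ℕ,
      (∫ x in Set.Ioo a b, deriv (wSysFun w (p m)) x * wSysFun w (p n) x)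
        + (∫ x in Set.Ioo a b, deriv (wSysFun w (p n)) x * wSysFun w (p m) x)
        = w b * (p m).eval b * (p n).eval b - w a * (p m).eval a * (p n).eval a := by
    intro m n
    set F : ℝ → ℝ := fun x => w x * (p m).eval x * (p n).eval x with hF
    set g : ℝ → ℝ := fun x =>
      deriv (wSysFun w (p m)) x * wSysFun w (p n) x
        + deriv (wSysFun w (p n)) x * wSysFun w (p m) x with hg
    have hFg : ∀ x ∈ Set.Ioo a b, HasDerivAt F (g x) x := by
      intro x hx
      have hdm := (hφd m x hx).hasDerivAt
      have hdn := (hφd n x hx).hasDerivAt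
      have hprod := hdm.mul hdn
      have heq : (fun y => wSysFun w (p m) y * wSysFun w (p n) y) =ᶠ[nhds x] F := by
        filter_upwards [isOpen_Ioo.mem_nhds hx] with y hy
        simp only [wSysFun, hF]
        have h2 : Real.sqrt (w y) * Real.sqrt (w y) = w y :=
          Real.mul_self_sqrt (hwpos y hy).le
        linear_combination (Polynomial.eval y (p m) * Polynomial.eval y (p n)) * h2
      have := hprod.congr_of_eventuallyEq heq.symm
      convert this using 1
      · rfl
      · rfl
      simp only [hg]
      ring
    have hcont : ContinuousOn F (Set.Icc a b) := by
      exact (hw.continuousOn.mul (Polynomial.continuousOn _)).mul (Polynomial.continuousOn _)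
    have hgint : IntegrableOn g (Set.Ioo a b) := (hint m n).add (hint n m)
    have hgint' : IntervalIntegrable g volume a b := by
      rw [intervalIntegrable_iff_integrableOn_Ioc_of_le hab.le]
      exact hgint.congr_set_ae Ioo_ae_eq_Ioc.symm
    have hftc := intervalIntegral.integral_eq_sub_of_hasDerivAt_of_le hab.le hcont hFg hgint'
    rw [intervalIntegral.integral_of_le hab.le, MeasureTheory.integral_Ioc_eq_integral_Ioo] at hftc
    rw [← MeasureTheory.integral_add (hint m n) (hint n m)]
    simpa [hF] using hftc
  refine ⟨key, fun ha hb m n => ?_⟩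
  have := key m n
  rw [ha, hb] at this
  linarith
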